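/- For positive reals x, y, x₀, y₀, the following inequality holds: log(1 + x²/y) ≥ log(1 + x₀²/y₀) - x₀²/y₀ + 2·x₀·x/y₀ - x₀²·(x² + y)/(y₀·(x₀² + y₀)). -/

import Mathlib

theorem stmt_2 (x y x₀ y₀ : ℝ) (hx : 0 < x) (hy : 0 < y) (hx₀ : 0 < x₀) (hy₀ : 0 < y₀) :
    Real.log (1 + x ^ 2 / y) ≥
      Real.log (1 + x₀ ^ 2 / y₀) - x₀ ^ 2 / y₀ + 2 * x₀ * x / y₀
        - x₀ ^ 2 * (x ^ 2 + y) / (y₀ * (x₀ ^ 2 + y₀)) := by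
  have hu : (0:ℝ) < 1 + x ^ 2 / y := by positivity
  have hu₀ : (0:ℝ) < 1 + x₀ ^ 2 / y₀ := by positivity
  have h1 : Real.log (1 + x₀ ^ 2 / y₀) - Real.log (1 + x ^ 2 / y) ≤
      (1 + x₀ ^ 2 / y₀) / (1 + x ^ 2 / y) - 1 := by
    have h := Real.log_le_sub_one_of_pos (div_pos hu₀ hu)
    rwa [Real.log_div hu₀.ne' hu.ne'] at h
  have h2 : (1 + x₀ ^ 2 / y₀) / (1 + x ^ 2 / y) - 1 ≤
      x₀ ^ 2 / y₀ - 2 * x₀ * x / y₀ + x₀ ^ 2 * (x ^ 2 + y) / (y₀ * (x₀ ^ 2 + y₀)) := by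
    rw [div_sub_one hu.ne', div_le_iff₀ hu]
    have key := sq_nonneg ((x₀ ^ 2 + y₀) * x - x₀ * (x ^ 2 + y))
    field_simp
    nlinarith [mul_nonneg (mul_nonneg hy.le hy₀.le) key, mul_pos hy hy₀]
  linarith
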